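/- Let x ∈ ℝ. Define the second version of the third-order Pell polynomials s : ℕ → ℝ by s 0 = 0, s 1 = 2, s 2 = 2x, and s n = 2x·s(n-1) + s(n-3) for n ≥ 3. Then for every n ≥ 2, s n = ∑_{ℓ=0}^{⌊(n-1)/3⌋} (2x)^{n-1-3ℓ} · ((n-ℓ-1)/(n-2ℓ-1)) · binomial(n-2ℓ-1, ℓ), where the coefficient (n-ℓ-1)/(n-2ℓ-1)·binomial(n-2ℓ-1,ℓ) is interpreted as a real number (the denominator n-2ℓ-1 is a positive integer for all ℓ in the summation range when n ≥ 2). -/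
import Mathlib

noncomputable def T (x : ℝ) (n ℓ : ℕ) : ℝ :=
  (2 * x) ^ (n - 1 - 3 * ℓ) * (((n : ℝ) - ℓ - 1) / ((n : ℝ) - 2 * ℓ - 1)) *
    (Nat.choose (n - 2 * ℓ - 1) ℓ : ℝ)


lemma coeff_id (m j : ℕ) (hm : 2 ≤ m) (hj : 1 ≤ j) (hjm : j ≤ m) :
    ((m:ℝ)+j)/m * (Nat.choose m j : ℝ) =
    ((m:ℝ)+j-1)/((m:ℝ)-1) * (Nat.choose (m-1) j : ℝ) +
    ((m:ℝ)+j-2)/((m:ℝ)-1) * (Nat.choose (m-1) (j-1) : ℝ) := by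
  have hM : (m:ℝ) ≠ 0 := by positivity
  have hM1 : (m:ℝ) - 1 ≠ 0 := by
    have : (2:ℝ) ≤ m := by exact_mod_cast hm
    linarith
  have hpas : (Nat.choose m j : ℝ) = (Nat.choose (m-1) j : ℝ) + (Nat.choose (m-1) (j-1) : ℝ) := by
    rw [show m = (m-1)+1 by omega, show m-1+1-1 = m-1 by omega,
        show j = (j-1)+1 by omega, show j-1+1-1 = j-1 by omega,
        Nat.choose_succ_succ']
    push_cast
    ring
  have hkey : (j:ℝ) * (Nat.choose (m-1) j : ℝ) = ((m:ℝ) - j) * (Nat.choose (m-1) (j-1) : ℝ) := by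
    have h := Nat.choose_succ_right_eq (m-1) (j-1)
    rw [show j - 1 + 1 = j by omega, show m - 1 - (j-1) = m - j by omega] at h
    have h2 : ((Nat.choose (m-1) j : ℕ) : ℝ) * j = ((Nat.choose (m-1) (j-1) : ℕ) : ℝ) * ((m - j : ℕ) : ℝ) := by
      exact_mod_cast h
    rw [Nat.cast_sub hjm] at h2
    linarith
  rw [hpas]
  field_simp
  ring_nf
  nlinarith [hkey]

lemma T_rec (x : ℝ) (n ℓ : ℕ) (hn : 5 ≤ n) (h : 3 * ℓ + 4 ≤ n) :
    T x n (ℓ+1) = 2 * x * T x (n-1) (ℓ+1) + T x (n-3) ℓ := by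
  obtain ⟨m, rfl, hm2, hjm⟩ : ∃ m, n = 2*ℓ + m + 3 ∧ 2 ≤ m ∧ ℓ + 1 ≤ m := ⟨n - 2*ℓ - 3, by omega, by omega, by omega⟩
  unfold T
  rw [show 2*ℓ+m+3 - 1 - 3*(ℓ+1) = m - ℓ - 1 by omega,
      show 2*ℓ+m+3 - 2*(ℓ+1) - 1 = m by omega,
      show 2*ℓ+m+3 - 1 = 2*ℓ+m+2 by omega,
      show 2*ℓ+m+3 - 3 = 2*ℓ+m by omega,
      show 2*ℓ+m+2 - 1 - 3*(ℓ+1) = m - ℓ - 2 by omega,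
      show 2*ℓ+m+2 - 2*(ℓ+1) - 1 = m - 1 by omega,
      show 2*ℓ+m - 1 - 3*ℓ = m - ℓ - 1 by omega,
      show 2*ℓ+m - 2*ℓ - 1 = m - 1 by omega]
  have hcid := coeff_id m (ℓ+1) hm2 (by omega) hjm
  have hc1 : ((2*ℓ+m+3 : ℕ) : ℝ) - (ℓ+1 : ℕ) - 1 = (m:ℝ) + ((ℓ:ℝ)+1) := by push_cast; ring
  have hc2 : ((2*ℓ+m+3 : ℕ) : ℝ) - 2*(ℓ+1 : ℕ) - 1 = (m:ℝ) := by push_cast; ring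
  have hc3 : ((2*ℓ+m+2 : ℕ) : ℝ) - (ℓ+1 : ℕ) - 1 = (m:ℝ) + ((ℓ:ℝ)+1) - 1 := by push_cast; ring
  have hc4 : ((2*ℓ+m+2 : ℕ) : ℝ) - 2*(ℓ+1 : ℕ) - 1 = (m:ℝ) - 1 := by push_cast; ring
  have hc5 : ((2*ℓ+m : ℕ) : ℝ) - (ℓ:ℕ) - 1 = (m:ℝ) + ((ℓ:ℝ)+1) - 2 := by push_cast; ring
  have hc6 : ((2*ℓ+m : ℕ) : ℝ) - 2*(ℓ:ℕ) - 1 = (m:ℝ) - 1 := by push_cast; ring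
  rw [hc1, hc2, hc3, hc4, hc5, hc6]
  rcases eq_or_lt_of_le hjm with heq | hlt
  · -- m = ℓ+1 : middle choose is 0
    have hz : Nat.choose (m-1) (ℓ+1) = 0 := by
      apply Nat.choose_eq_zero_of_lt; omega
    have hex : m - ℓ - 1 = 0 := by omega
    have hm1 : m - 1 = ℓ := by omega
    rw [hz, hex, hm1, ← heq, Nat.choose_self, Nat.choose_self]
    have hMne : (m:ℝ) ≠ 0 := by positivity
    have hM1ne : (m:ℝ) - 1 ≠ 0 := by
      have : (2:ℝ) ≤ m := by exact_mod_cast hm2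
      linarith
    have hℓm : (ℓ:ℝ) + 1 = (m:ℝ) := by exact_mod_cast heq
    push_cast
    rw [hℓm]
    field_simp
    ring
  · -- ℓ + 2 ≤ m
    have hex : m - ℓ - 1 = (m - ℓ - 2) + 1 := by omega
    rw [hex, pow_succ]
    have hjc : (((ℓ:ℝ)+1)) = ((ℓ+1 : ℕ) : ℝ) := by push_cast; ring
    have := hcid
    push_cast at this
    linear_combination ((2*x)^(m-ℓ-2)*(2*x)) * this

lemma T_zero (x : ℝ) (n : ℕ) (h5 : 5 ≤ n) : T x n 0 = 2 * x * T x (n-1) 0 := by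
  unfold T
  have e : n - 1 - 3*0 = ((n-1) - 1 - 3*0) + 1 := by omega
  rw [e, pow_succ]
  have c7 : ((n-1 : ℕ) : ℝ) = (n:ℝ) - 1 := by
    push_cast [Nat.cast_sub (by omega : 1 ≤ n)]; ring
  rw [c7]
  have hn5 : (5:ℝ) ≤ n := by exact_mod_cast h5
  have d1 : ((n:ℝ) - (0:ℕ) - 1) / ((n:ℝ) - 2*(0:ℕ) - 1) = 1 := by
    push_cast; rw [mul_zero, div_self (by linarith)]
  have d2 : ((n:ℝ) - 1 - (0:ℕ) - 1) / ((n:ℝ) - 1 - 2*(0:ℕ) - 1) = 1 := by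
    push_cast; rw [mul_zero, div_self (by linarith)]
  rw [d1, d2]
  simp [Nat.choose_zero_right]
  ring

lemma sum_rec (x : ℝ) (n : ℕ) (h5 : 5 ≤ n) :
    ∑ ℓ ∈ Finset.range ((n - 1) / 3 + 1), T x n ℓ =
    2 * x * ∑ ℓ ∈ Finset.range ((n - 1 - 1) / 3 + 1), T x (n-1) ℓ +
    ∑ ℓ ∈ Finset.range ((n - 3 - 1) / 3 + 1), T x (n-3) ℓ := by
  set K := (n - 4) / 3 + 1 with hKdef
  have A : ∑ ℓ ∈ Finset.range (K+1), T x n ℓ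
      = ∑ ℓ ∈ Finset.range K, T x n (ℓ+1) + T x n 0 := Finset.sum_range_succ' _ K
  have B : ∑ ℓ ∈ Finset.range (K+1), T x (n-1) ℓ
      = ∑ ℓ ∈ Finset.range K, T x (n-1) (ℓ+1) + T x (n-1) 0 := Finset.sum_range_succ' _ K
  have hmid : ∑ ℓ ∈ Finset.range ((n - 1 - 1) / 3 + 1), T x (n-1) ℓ
      = ∑ ℓ ∈ Finset.range (K+1), T x (n-1) ℓ := by
    rcases (by omega : (n - 1 - 1) / 3 + 1 = K + 1 ∨
        ((n - 1 - 1) / 3 + 1 = K ∧ n % 3 = 1)) with he | ⟨he, hm3⟩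
    · rw [he]
    · rw [Finset.sum_range_succ (fun ℓ => T x (n-1) ℓ) K, he]
      have hz : T x (n-1) K = 0 := by
        have : Nat.choose ((n-1) - 2*K - 1) K = 0 :=
          Nat.choose_eq_zero_of_lt (by omega)
        simp [T, this]
      rw [hz, add_zero]
  have C : ∑ ℓ ∈ Finset.range K, T x n (ℓ+1)
      = ∑ ℓ ∈ Finset.range K, (2 * x * T x (n-1) (ℓ+1) + T x (n-3) ℓ) := by
    refine Finset.sum_congr rfl fun ℓ hl => ?_
    rw [Finset.mem_range] at hl
    exact T_rec x n ℓ h5 (by omega)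
  rw [show (n-1)/3 + 1 = K + 1 by omega, show (n-3-1)/3 + 1 = K by omega,
      A, C, hmid, B, Finset.sum_add_distrib, T_zero x n h5, ← Finset.mul_sum]
  ring

lemma main_aux (x : ℝ) (s : ℕ → ℝ)
    (h0 : s 0 = 0) (h1 : s 1 = 2) (h2 : s 2 = 2 * x)
    (hrec : ∀ n, 3 ≤ n → s n = 2 * x * s (n - 1) + s (n - 3)) :
    ∀ n, 2 ≤ n → s n = ∑ ℓ ∈ Finset.range ((n - 1) / 3 + 1), T x n ℓ := by
  intro n
  induction n using Nat.strong_induction_on with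
  | _ n ih =>
  intro hn
  rcases (by omega : n = 2 ∨ n = 3 ∨ n = 4 ∨ 5 ≤ n) with rfl | rfl | rfl | h5
  · norm_num [T, h2]
  · rw [hrec 3 (by norm_num)]
    norm_num [T, h0, h2]
    ring
  · rw [hrec 4 (by norm_num), hrec 3 (by norm_num)]
    norm_num [T, h0, h1, h2, Finset.sum_range_succ]
    ring
  · rw [hrec n (by omega), ih (n-1) (by omega) (by omega), ih (n-3) (by omega) (by omega),
        sum_rec x n h5]

theorem third_order_pell_second_version_explicit_formula
    (x : ℝ) (s : ℕ → ℝ)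
    (h0 : s 0 = 0) (h1 : s 1 = 2) (h2 : s 2 = 2 * x)
    (hrec : ∀ n, 3 ≤ n → s n = 2 * x * s (n - 1) + s (n - 3)) :
    ∀ n, 2 ≤ n →
      s n = ∑ ℓ ∈ Finset.range ((n - 1) / 3 + 1),
        (2 * x) ^ (n - 1 - 3 * ℓ) *
          (((n : ℝ) - ℓ - 1) / ((n : ℝ) - 2 * ℓ - 1)) *
          (Nat.choose (n - 2 * ℓ - 1) ℓ : ℝ) := by
  intro n hn
  rw [main_aux x s h0 h1 h2 hrec n hn]
  rfl
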